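/- Bayesian networks embed into CP-logic: Let B be a Bayesian network and ⟨T, I, N⟩ a B-process. Then the probabilistic process ⟨T, I⟩, together with the map E sending each non-leaf node s of T to the CP-law of CP_B determined by the node N(s) and the assignment w giving each parent p of N(s) the unique value w(p) with (p, w(p)) ∈ I(s), is an execution model of the CP-theory CP_B. -/

import Mathlib

noncomputable section
open scoped Classical

namespace CP

/-- The three truth values. -/
inductive TV where
  | f | u | t
deriving DecidableEq

namespace TV

/-- Rank of a truth value in the truth order `f ≤_t u ≤_t t`. -/
def rank : TV → ℕ
  | f => 0
  | u => 1
  | t => 2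

/-- Minimum in the truth order. -/
def tmin (a b : TV) : TV := if rank a ≤ rank b then a else b

/-- Maximum in the truth order. -/
def tmax (a b : TV) : TV := if rank a ≤ rank b then b else a

/-- Kleene negation. -/
def tneg : TV → TV
  | f => t
  | u => u
  | t => f

/-- The precision order on truth values: `u ≤_p f` and `u ≤_p t` (and reflexivity). -/
def lep (a b : TV) : Prop := a = u ∨ a = b

end TV

/-- Pointwise precision order on three-valued interpretations. -/
def leP {A : Type} (ν ν' : A → TV) : Prop := ∀ a, TV.lep (ν a) (ν' a)

/-- Propositional formulas over a type `A` of atoms (including the constant `tru`,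
the empty conjunction, used as the body of CP-laws for parentless nodes). -/
inductive Form (A : Type) where
  | tru  : Form A
  | atom : A → Form A
  | conj : Form A → Form A → Form A
  | disj : Form A → Form A → Form A
  | neg  : Form A → Form A

namespace Form

variable {A : Type}

/-- Two-valued satisfaction of a formula in an interpretation (a set of atoms). -/
def sat (I : Set A) : Form A → Prop
  | .tru => True
  | .atom a => a ∈ I
  | .conj φ ψ => sat I φ ∧ sat I ψ
  | .disj φ ψ => sat I φ ∨ sat I ψ
  | .neg φ => ¬ sat I φ

/-- Kleene three-valued valuation of a formula. -/
def val (ν : A → TV) : Form A → TV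
  | .tru => TV.t
  | .atom a => ν a
  | .conj φ ψ => TV.tmin (val ν φ) (val ν ψ)
  | .disj φ ψ => TV.tmax (val ν φ) (val ν ψ)
  | .neg φ => TV.tneg (val ν φ)

end Form

/-- A CP-law: a nonempty head list of distinct atoms with probabilities in `(0,1]`
summing to at most `1`, together with a body formula. -/
structure CPLaw (A : Type) where
  head : List (A × ℝ)
  body : Form A
  head_ne : head ≠ []
  head_nodup : (head.map Prod.fst).Nodup
  head_pos : ∀ p ∈ head, 0 < p.2 ∧ p.2 ≤ 1
  head_sum : (head.map Prod.snd).sum ≤ 1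

namespace CPLaw

variable {A : Type}

/-- `head_At(r)`: the set of atoms occurring in the head of `r`. -/
def headAt (r : CPLaw A) : Set A := {a | a ∈ r.head.map Prod.fst}

/-- The sum `Σᵢ αᵢ` of the probabilities in the head of `r`. -/
def psum (r : CPLaw A) : ℝ := (r.head.map Prod.snd).sum

end CPLaw

/-- A probabilistic process: a finite rooted tree (given by a parent function with a
depth function ensuring well-foundedness), with an interpretation, an edge probability
and a path probability attached to each node, together with (for use in execution
models) a CP-law index `rule` attached to each node and, for each non-root node, the
`choice` in the head of the rule fired at its parent that it corresponds to
(`none` is the extra child carrying the leftover probability `1 - Σᵢ αᵢ`). -/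
structure Proc (A R : Type) where
  Node : Type
  [fintypeNode : Fintype Node]
  root : Node
  parent : Node → Node
  depth : Node → ℕ
  interp : Node → Set A
  prob : Node → ℝ
  pathProb : Node → ℝ
  rule : Node → R
  choice : Node → Option ℕ
  depth_root : depth root = 0
  depth_parent : ∀ s, s ≠ root → depth s = depth (parent s) + 1
  pathProb_root : pathProb root = 1
  pathProb_parent : ∀ s, s ≠ root → pathProb s = pathProb (parent s) * prob s

attribute [instance] Proc.fintypeNode

namespace Proc

variable {A R : Type} (W : Proc A R)

/-- `s'` is a child of `s`. -/
def isChild (s' s : W.Node) : Prop := s' ≠ W.root ∧ W.parent s' = s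

/-- `s` is a leaf. -/
def isLeaf (s : W.Node) : Prop := ∀ s', ¬ W.isChild s' s

/-- `strictAnc a b`: `a` is a strict ancestor of `b`. -/
def strictAnc (a b : W.Node) : Prop :=
  Relation.TransGen (fun y x => W.isChild y x) b a

end Proc

variable {A R : Type}

/-- `R_E(s)`: the CP-laws that have not fired at any strict ancestor of `s`. -/
def RE (W : Proc A R) (s : W.Node) : Set R :=
  {r | ∀ s', W.strictAnc s' s → W.rule s' ≠ r}

/-- The CP-law `E(s)` fires at the non-leaf node `s`: `s` has exactly one child for
each head element `(Aᵢ, αᵢ)` (with interpretation `I(s) ∪ {Aᵢ}` and edge probability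
`αᵢ`), plus exactly one extra child with unchanged interpretation and edge probability
`1 - Σᵢ αᵢ` in case `Σᵢ αᵢ < 1`. -/
def FiresAt (C : R → CPLaw A) (W : Proc A R) (s : W.Node) : Prop :=
  (∀ s', W.isChild s' s →
     (∀ i, W.choice s' = some i →
        ∃ h : i < (C (W.rule s)).head.length,
          W.interp s' = insert ((C (W.rule s)).head.get ⟨i, h⟩).1 (W.interp s) ∧
          W.prob s' = ((C (W.rule s)).head.get ⟨i, h⟩).2) ∧
     (W.choice s' = none →
        (C (W.rule s)).psum < 1 ∧ W.interp s' = W.interp s ∧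
          W.prob s' = 1 - (C (W.rule s)).psum)) ∧
  (∀ s₁ s₂, W.isChild s₁ s → W.isChild s₂ s → W.choice s₁ = W.choice s₂ → s₁ = s₂) ∧
  (∀ i, i < (C (W.rule s)).head.length → ∃ s', W.isChild s' s ∧ W.choice s' = some i) ∧
  ((C (W.rule s)).psum < 1 → ∃ s', W.isChild s' s ∧ W.choice s' = none)

/-- `⟨W, I, E⟩` is a weak execution model of the CP-theory `C`. -/
def IsWEM (C : R → CPLaw A) (W : Proc A R) : Prop :=
  W.interp W.root = (∅ : Set A) ∧
  (∀ s, s ≠ W.root → 0 ≤ W.prob s ∧ W.prob s ≤ 1) ∧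
  (∀ s, ¬ W.isLeaf s →
    (∑ s' ∈ Finset.univ.filter (fun s' => W.isChild s' s), W.prob s') = 1) ∧
  (∀ s, ¬ W.isLeaf s →
    W.rule s ∈ RE W s ∧ Form.sat (W.interp s) (C (W.rule s)).body ∧ FiresAt C W s) ∧
  (∀ l, W.isLeaf l → ∀ r ∈ RE W l, ¬ Form.sat (W.interp l) (C r).body)

/-- `ν 0, …, ν n` is a hypothetical derivation sequence at node `s`. -/
def IsHDS (C : R → CPLaw A) (W : Proc A R) (s : W.Node)
    (ν : ℕ → A → TV) (n : ℕ) : Prop :=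
  (∀ a, ν 0 a = if a ∈ W.interp s then TV.t else TV.f) ∧
  ∀ i, i < n → ∃ r ∈ RE W s,
    Form.val (ν i) (C r).body ≠ TV.f ∧
    (∀ p ∈ (C r).headAt, ν i p = TV.f → ν (i+1) p = TV.u) ∧
    (∀ p, ¬ (p ∈ (C r).headAt ∧ ν i p = TV.f) → ν (i+1) p = ν i p)

/-- The hypothetical derivation sequence `ν 0, …, ν n` at `s` is terminal. -/
def HDSTerminal (C : R → CPLaw A) (W : Proc A R) (s : W.Node)
    (ν : ℕ → A → TV) (n : ℕ) : Prop :=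
  ¬ ∃ r ∈ RE W s, Form.val (ν n) (C r).body ≠ TV.f ∧
      ∃ p ∈ (C r).headAt, ν n p = TV.f

/-- `⟨W, I, E⟩` is an execution model of `C`: a weak execution model in which, at every
non-leaf node, the body of the fired CP-law is not unknown in the potential of the
node (the common limit of all terminal hypothetical derivation sequences). -/
def IsExec (C : R → CPLaw A) (W : Proc A R) : Prop :=
  IsWEM C W ∧
  ∀ s, ¬ W.isLeaf s → ∀ ν n, IsHDS C W s ν n → HDSTerminal C W s ν n →
    Form.val (ν n) (C (W.rule s)).body ≠ TV.u

/-- `π_T`: the probability distribution on interpretations induced by a process. -/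
def piT (W : Proc A R) (J : Set A) : ℝ :=
  ∑ l ∈ Finset.univ.filter (fun l => W.isLeaf l ∧ W.interp l = J), W.pathProb l

/-- A Bayesian network: a finite DAG with, for each node, a finite nonempty domain and
a conditional probability table. -/
structure BN where
  N : Type
  [fintypeN : Fintype N]
  [deqN : DecidableEq N]
  parents : N → Finset N
  acyclic : ∀ n, ¬ Relation.TransGen (fun a b => a ∈ parents b) n n
  dom : N → Type
  [fintypeDom : ∀ n, Fintype (dom n)]
  [deqDom : ∀ n, DecidableEq (dom n)]
  [neDom : ∀ n, Nonempty (dom n)]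
  cpt : (n : N) → ((p : {x // x ∈ parents n}) → dom p.1) → dom n → ℝ
  cpt_nonneg : ∀ n w v, 0 ≤ cpt n w v
  cpt_sum : ∀ n w, (∑ v, cpt n w v) = 1

attribute [instance] BN.fintypeN BN.deqN BN.fintypeDom BN.deqDom BN.neDom

namespace BN

/-- The atom type `A_B = {(n,v) : n ∈ N, v ∈ dom(n)}` associated with `B`. -/
def Atom (B : BN) : Type := Σ n : B.N, B.dom n

/-- Assignments of values to the parents of `n`. -/
def Assign (B : BN) (n : B.N) : Type := (p : {x // x ∈ B.parents n}) → B.dom p.1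

instance (B : BN) : Fintype B.Atom := by unfold Atom; infer_instance

instance (B : BN) (n : B.N) : Fintype (B.Assign n) := by unfold Assign; infer_instance

instance (B : BN) (n : B.N) : Nonempty (B.Assign n) :=
  ⟨fun _ => Classical.arbitrary _⟩

/-- Indices for the CP-laws of `CP_B`: a node together with an assignment of values to
its parents. -/
def Idx (B : BN) : Type := Σ n : B.N, B.Assign n

instance (B : BN) : Fintype B.Idx := by unfold Idx; infer_instance

/-- The body of the CP-law for node `n` and parent assignment `w`: the conjunction of
the atoms `(p, w(p))` over the parents `p` of `n` (the empty conjunction, a tautology,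
if `n` has no parents). -/
def bodyOf (B : BN) (n : B.N) (w : B.Assign n) : Form B.Atom :=
  ((B.parents n).attach.toList.map
      (fun p => Form.atom (⟨p.1, w p⟩ : B.Atom))).foldr Form.conj Form.tru

/-- The head of the CP-law for node `n` and parent assignment `w`: the list of pairs
`((n,v), CPT_n(v | w))` over all `v` with `CPT_n(v | w) > 0`. -/
def headOf (B : BN) (n : B.N) (w : B.Assign n) : List (B.Atom × ℝ) :=
  ((Finset.univ.filter (fun v : B.dom n => 0 < B.cpt n w v)).toList).map
    (fun v => ((⟨n, v⟩ : B.Atom), B.cpt n w v))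

/-- The CP-law of `CP_B` determined by a node and a parent assignment. -/
def lawOf (B : BN) : B.Idx → CPLaw B.Atom
  | ⟨n, w⟩ =>
    { head := B.headOf n w
      body := B.bodyOf n w
      head_ne := by
        intro hnil
        have hfilter : (Finset.univ.filter (fun v : B.dom n => 0 < B.cpt n w v)) = ∅ := by
          simpa [headOf, List.map_eq_nil_iff, Finset.toList_eq_nil] using hnil
        have hle : ∀ v : B.dom n, B.cpt n w v ≤ 0 := by
          intro v
          by_contra hv
          have hmem : v ∈ Finset.univ.filter (fun v : B.dom n => 0 < B.cpt n w v) := by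
            simp only [Finset.mem_filter, Finset.mem_univ, true_and]
            exact lt_of_not_ge fun hge => hv (by linarith)
          rw [hfilter] at hmem
          exact absurd hmem (Finset.notMem_empty v)
        have hzero : (∑ v, B.cpt n w v) ≤ 0 := Finset.sum_nonpos fun v _ => hle v
        have hone := B.cpt_sum n w
        linarith
      head_nodup := by
        have hmap : ((B.headOf n w).map Prod.fst) =
            (((Finset.univ.filter (fun v : B.dom n => 0 < B.cpt n w v)).toList).map
              (fun v => (⟨n, v⟩ : B.Atom))) := by
          simp [headOf, List.map_map, Function.comp] <;> rfl
        rw [hmap]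
        exact (Finset.nodup_toList _).map fun a b hab => sigma_mk_injective hab
      head_pos := by
        intro p hp
        simp only [headOf, List.mem_map, Finset.mem_toList, Finset.mem_filter,
          Finset.mem_univ, true_and] at hp
        obtain ⟨v, hv, rfl⟩ := hp
        refine ⟨hv, ?_⟩
        have hnn : ∀ u ∈ (Finset.univ : Finset (B.dom n)), 0 ≤ B.cpt n w u :=
          fun u _ => B.cpt_nonneg n w u
        have hle := Finset.single_le_sum hnn (Finset.mem_univ v)
        have hone := B.cpt_sum n w
        simp only []
        linarith
      head_sum := by
        have hmap : ((B.headOf n w).map Prod.snd) =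
            (((Finset.univ.filter (fun v : B.dom n => 0 < B.cpt n w v)).toList).map
              (fun v => B.cpt n w v)) := by
          simp [headOf, List.map_map, Function.comp]
        rw [hmap, Finset.sum_map_toList]
        have hsub : (Finset.univ.filter (fun v : B.dom n => 0 < B.cpt n w v)) ⊆
            Finset.univ := Finset.filter_subset _ _
        calc (∑ v ∈ Finset.univ.filter (fun v : B.dom n => 0 < B.cpt n w v), B.cpt n w v)
            ≤ ∑ v, B.cpt n w v :=
              Finset.sum_le_sum_of_subset_of_nonneg hsub
                (fun v _ _ => B.cpt_nonneg n w v)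
          _ = 1 := B.cpt_sum n w }

end BN

/-- A `B`-process: a probabilistic process over the atoms `A_B` together with a map
`nodemap` (from non-leaf tree nodes to network nodes) such that on every root-to-leaf
path, `nodemap` restricts to an order-preserving bijection onto the network nodes, and
the children of every non-leaf node `s` realize the conditional probability table of
`nodemap s` given the unique assignment of values to its parents recorded in
`I(s)`. -/
structure BProc (B : BN) where
  Node : Type
  [fintypeNode : Fintype Node]
  root : Node
  parent : Node → Node
  depth : Node → ℕ
  interp : Node → Set B.Atom
  prob : Node → ℝ
  pathProb : Node → ℝ
  nodemap : Node → B.N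
  depth_root : depth root = 0
  depth_parent : ∀ s, s ≠ root → depth s = depth (parent s) + 1
  pathProb_root : pathProb root = 1
  pathProb_parent : ∀ s, s ≠ root → pathProb s = pathProb (parent s) * prob s
  interp_root : interp root = ∅
  prob_mem : ∀ s, s ≠ root → 0 ≤ prob s ∧ prob s ≤ 1
  prob_sum : ∀ s, (∃ c, c ≠ root ∧ parent c = s) →
    (∑ c ∈ Finset.univ.filter (fun c => c ≠ root ∧ parent c = s), prob c) = 1
  branch_bij : ∀ l, (∀ c, ¬ (c ≠ root ∧ parent c = l)) →
    Set.BijOn nodemap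
      {s | Relation.TransGen (fun y x => y ≠ root ∧ parent y = x) l s} Set.univ
  order_pres : ∀ l, (∀ c, ¬ (c ≠ root ∧ parent c = l)) →
    ∀ s s', Relation.TransGen (fun y x => y ≠ root ∧ parent y = x) l s →
      Relation.TransGen (fun y x => y ≠ root ∧ parent y = x) l s' →
      Relation.TransGen (fun a b => a ∈ B.parents b) (nodemap s) (nodemap s') →
      Relation.TransGen (fun y x => y ≠ root ∧ parent y = x) s' s
  children_spec : ∀ s, (∃ c, c ≠ root ∧ parent c = s) →
    ∃ w : B.Assign (nodemap s),
      (∀ p : {x // x ∈ B.parents (nodemap s)},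
        (⟨p.1, w p⟩ : B.Atom) ∈ interp s) ∧
      (∀ w' : B.Assign (nodemap s),
        (∀ p, (⟨p.1, w' p⟩ : B.Atom) ∈ interp s) → w' = w) ∧
      ∃ g : {v : B.dom (nodemap s) // 0 < B.cpt (nodemap s) w v} → Node,
        Function.Injective g ∧
        (∀ v, (g v ≠ root ∧ parent (g v) = s) ∧
          interp (g v) = insert (⟨nodemap s, v.1⟩ : B.Atom) (interp s) ∧
          prob (g v) = B.cpt (nodemap s) w v.1) ∧
        (∀ c, (c ≠ root ∧ parent c = s) → ∃ v, c = g v)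

attribute [instance] BProc.fintypeNode

/-- The assignment of values to the parents of `nodemap s` recorded in `I(s)`
(the unique such assignment, for non-leaf `s`). -/
def BProc.assignAt {B : BN} (W : BProc B) (s : W.Node) : B.Assign (W.nodemap s) :=
  if h : ∃ c, c ≠ W.root ∧ W.parent c = s then (W.children_spec s h).choose
  else Classical.arbitrary _

namespace BProc

variable {B : BN} (W : BProc B)

/-- ancestors have smaller depth -/
lemma depth_lt_of_anc {c s : W.Node}
    (h : Relation.TransGen (fun y x => y ≠ W.root ∧ W.parent y = x) c s) :
    W.depth s < W.depth c := by
  induction h with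
  | single h =>
      have := W.depth_parent _ h.1
      rw [h.2] at this; omega
  | tail h1 h2 ih =>
      have := W.depth_parent _ h2.1
      rw [h2.2] at this; omega

lemma ne_of_anc {c s : W.Node}
    (h : Relation.TransGen (fun y x => y ≠ W.root ∧ W.parent y = x) c s) :
    s ≠ c := by
  intro he; have := W.depth_lt_of_anc h; rw [he] at this; omega

lemma interp_subset_child {c s : W.Node} (h : c ≠ W.root ∧ W.parent c = s) :
    W.interp s ⊆ W.interp c := by
  obtain ⟨w, h1, h2, g, hginj, hg, hsur⟩ := W.children_spec s ⟨c, h⟩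
  obtain ⟨v, rfl⟩ := hsur c h
  rw [(hg v).2.1]; exact Set.subset_insert _ _

lemma interp_mono {c s : W.Node}
    (h : Relation.TransGen (fun y x => y ≠ W.root ∧ W.parent y = x) c s) :
    W.interp s ⊆ W.interp c := by
  induction h with
  | single h => exact W.interp_subset_child h
  | tail h1 h2 ih => exact (W.interp_subset_child h2).trans ih

lemma exists_leaf (c : W.Node) :
    ∃ l, (∀ c', ¬ (c' ≠ W.root ∧ W.parent c' = l)) ∧
      (l = c ∨ Relation.TransGen (fun y x => y ≠ W.root ∧ W.parent y = x) l c) := by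
  set M := Finset.univ.sup W.depth with hMdef
  have hM : ∀ x : W.Node, W.depth x ≤ M := fun x => Finset.le_sup (Finset.mem_univ x)
  suffices H : ∀ k (c : W.Node), M - W.depth c ≤ k →
      ∃ l, (∀ c', ¬ (c' ≠ W.root ∧ W.parent c' = l)) ∧
        (l = c ∨ Relation.TransGen (fun y x => y ≠ W.root ∧ W.parent y = x) l c) from
    H M c (by omega)
  intro k
  induction k with
  | zero =>
      intro c hc
      by_cases hleaf : ∀ c', ¬ (c' ≠ W.root ∧ W.parent c' = c)
      · exact ⟨c, hleaf, Or.inl rfl⟩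
      · push_neg at hleaf
        obtain ⟨c', hc1, hc2⟩ := hleaf
        have hd := W.depth_parent c' hc1
        rw [hc2] at hd
        have := hM c'; have := hM c; omega
  | succ k ih =>
      intro c hc
      by_cases hleaf : ∀ c', ¬ (c' ≠ W.root ∧ W.parent c' = c)
      · exact ⟨c, hleaf, Or.inl rfl⟩
      · push_neg at hleaf
        obtain ⟨c', hc1, hc2⟩ := hleaf
        have hd := W.depth_parent c' hc1
        rw [hc2] at hd
        have hM' := hM c'
        obtain ⟨l, hl, hlc⟩ := ih c' (by omega)
        refine ⟨l, hl, Or.inr ?_⟩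
        rcases hlc with rfl | hlc
        · exact Relation.TransGen.single ⟨hc1, hc2⟩
        · exact hlc.tail ⟨hc1, hc2⟩

lemma nodemap_ne {s s' : W.Node} (hs : ∃ c, c ≠ W.root ∧ W.parent c = s)
    (h : Relation.TransGen (fun y x => y ≠ W.root ∧ W.parent y = x) s s') :
    W.nodemap s' ≠ W.nodemap s := by
  obtain ⟨l, hleaf, hlc⟩ := W.exists_leaf s
  have hls : Relation.TransGen (fun y x => y ≠ W.root ∧ W.parent y = x) l s := by
    rcases hlc with rfl | hlc
    · obtain ⟨c, hc⟩ := hs; exact absurd hc (hleaf c)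
    · exact hlc
  have hls' := hls.trans h
  intro heq
  have : s' = s := (W.branch_bij l hleaf).injOn hls' hls heq
  exact W.ne_of_anc h this

lemma atom_fst {c : W.Node} {a : B.Atom} (ha : a ∈ W.interp c) :
    ∃ s', Relation.TransGen (fun y x => y ≠ W.root ∧ W.parent y = x) c s' ∧
      (∃ c', c' ≠ W.root ∧ W.parent c' = s') ∧ a.1 = W.nodemap s' := by
  suffices H : ∀ k (c : W.Node), W.depth c ≤ k → ∀ a ∈ W.interp c,
      ∃ s', Relation.TransGen (fun y x => y ≠ W.root ∧ W.parent y = x) c s' ∧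
        (∃ c', c' ≠ W.root ∧ W.parent c' = s') ∧ a.1 = W.nodemap s' from
    H (W.depth c) c le_rfl a ha
  intro k
  induction k with
  | zero =>
      intro c hc a ha
      by_cases hroot : c = W.root
      · subst hroot; rw [W.interp_root] at ha; exact absurd ha (Set.notMem_empty a)
      · have := W.depth_parent c hroot; omega
  | succ k ih =>
      intro c hc a ha
      by_cases hroot : c = W.root
      · subst hroot; rw [W.interp_root] at ha; exact absurd ha (Set.notMem_empty a)
      · have hd := W.depth_parent c hroot
        set s := W.parent c with hsdef
        have hchild : c ≠ W.root ∧ W.parent c = s := ⟨hroot, rfl⟩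
        obtain ⟨w, h1, h2, g, hginj, hg, hsur⟩ := W.children_spec s ⟨c, hchild⟩
        obtain ⟨v, hv⟩ := hsur c hchild
        rw [hv, (hg v).2.1] at ha
        rcases Set.mem_insert_iff.mp ha with rfl | ha
        · exact ⟨s, Relation.TransGen.single hchild, ⟨c, hchild⟩, rfl⟩
        · obtain ⟨s', hs1, hs2, hs3⟩ := ih s (by omega) a ha
          exact ⟨s', Relation.TransGen.head hchild hs1, hs2, hs3⟩

lemma unique_val {c : W.Node} {n : B.N} {v v' : B.dom n}
    (h1 : (⟨n, v⟩ : B.Atom) ∈ W.interp c) (h2 : (⟨n, v'⟩ : B.Atom) ∈ W.interp c) :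
    v = v' := by
  suffices H : ∀ k (c : W.Node), W.depth c ≤ k → ∀ (n : B.N) (v v' : B.dom n),
      (⟨n, v⟩ : B.Atom) ∈ W.interp c → (⟨n, v'⟩ : B.Atom) ∈ W.interp c → v = v' from
    H (W.depth c) c le_rfl n v v' h1 h2
  intro k
  induction k with
  | zero =>
      intro c hc n v v' h1 h2
      by_cases hroot : c = W.root
      · subst hroot; rw [W.interp_root] at h1; exact absurd h1 (Set.notMem_empty _)
      · have := W.depth_parent c hroot; omega
  | succ k ih =>
      intro c hc n v v' h1 h2
      by_cases hroot : c = W.root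
      · subst hroot; rw [W.interp_root] at h1; exact absurd h1 (Set.notMem_empty _)
      · have hd := W.depth_parent c hroot
        set s := W.parent c with hsdef
        have hchild : c ≠ W.root ∧ W.parent c = s := ⟨hroot, rfl⟩
        obtain ⟨w, hw1, hw2, g, hginj, hg, hsur⟩ := W.children_spec s ⟨c, hchild⟩
        obtain ⟨vc, hvc⟩ := hsur c hchild
        have hIc : W.interp c = insert (⟨W.nodemap s, vc.1⟩ : B.Atom) (W.interp s) := by
          rw [hvc]; exact (hg vc).2.1
        rw [hIc] at h1 h2
        have hfresh : ∀ (u : B.dom n), (⟨n, u⟩ : B.Atom) ∈ W.interp s →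
            n ≠ W.nodemap s := by
          intro u hu
          obtain ⟨s'', hanc, hhc, hfst⟩ := W.atom_fst hu
          have := W.nodemap_ne ⟨c, hchild⟩ hanc
          have hfst' : n = W.nodemap s'' := hfst
          rw [hfst']; exact this
        rcases Set.mem_insert_iff.mp h1 with he1 | h1' <;>
          rcases Set.mem_insert_iff.mp h2 with he2 | h2'
        · have : (⟨n, v⟩ : B.Atom) = ⟨n, v'⟩ := he1.trans he2.symm
          exact sigma_mk_injective this
        · have hn : n = W.nodemap s := congrArg Sigma.fst he1
          exact absurd hn (hfresh v' h2')
        · have hn : n = W.nodemap s := congrArg Sigma.fst he2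
          exact absurd hn (hfresh v h1')
        · exact ih s (by omega) n v v' h1' h2'

lemma assignAt_spec (s : W.Node) (h : ∃ c, c ≠ W.root ∧ W.parent c = s) :
    (∀ p : {x // x ∈ B.parents (W.nodemap s)},
        (⟨p.1, W.assignAt s p⟩ : B.Atom) ∈ W.interp s) ∧
    (∀ w' : B.Assign (W.nodemap s),
        (∀ p, (⟨p.1, w' p⟩ : B.Atom) ∈ W.interp s) → w' = W.assignAt s) ∧
    ∃ g : {v : B.dom (W.nodemap s) // 0 < B.cpt (W.nodemap s) (W.assignAt s) v} → W.Node,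
      Function.Injective g ∧
      (∀ v, (g v ≠ W.root ∧ W.parent (g v) = s) ∧
        W.interp (g v) = insert (⟨W.nodemap s, v.1⟩ : B.Atom) (W.interp s) ∧
        W.prob (g v) = B.cpt (W.nodemap s) (W.assignAt s) v.1) ∧
      (∀ c, (c ≠ W.root ∧ W.parent c = s) → ∃ v, c = g v) := by
  have hspec := (W.children_spec s h).choose_spec
  unfold BProc.assignAt
  rw [dif_pos h]
  exact hspec

end BProc

section BodyLemmas

variable {B : BN}

lemma sat_foldr {α : Type} (I : Set B.Atom) (f : α → B.Atom) (l : List α) :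
    Form.sat I ((l.map (fun x => Form.atom (f x))).foldr Form.conj Form.tru) ↔
      ∀ x ∈ l, f x ∈ I := by
  induction l with
  | nil => simp [Form.sat]
  | cons a l ih => simp [Form.sat, ih]

lemma sat_bodyOf {n : B.N} {w : B.Assign n} {I : Set B.Atom} :
    Form.sat I (B.bodyOf n w) ↔
      ∀ p : {x // x ∈ B.parents n}, (⟨p.1, w p⟩ : B.Atom) ∈ I := by
  unfold BN.bodyOf
  refine (sat_foldr I (fun p : {x // x ∈ B.parents n} => (⟨p.1, w p⟩ : B.Atom)) _).trans ?_
  constructor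
  · intro h p; exact h p (by simp)
  · intro h p _; exact h p

lemma val_foldr {α : Type} (ν : B.Atom → TV) (f : α → B.Atom) (l : List α)
    (h : ∀ x ∈ l, ν (f x) = TV.t) :
    Form.val ν ((l.map (fun x => Form.atom (f x))).foldr Form.conj Form.tru) = TV.t := by
  induction l with
  | nil => simp [Form.val]
  | cons a l ih =>
      simp only [List.map_cons, List.foldr_cons, Form.val]
      rw [h a (List.mem_cons_self), ih (fun x hx => h x (List.mem_cons_of_mem a hx))]
      rfl

lemma val_bodyOf {n : B.N} {w : B.Assign n} {ν : B.Atom → TV}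
    (h : ∀ p : {x // x ∈ B.parents n}, ν ⟨p.1, w p⟩ = TV.t) :
    Form.val ν (B.bodyOf n w) = TV.t := by
  unfold BN.bodyOf
  exact val_foldr ν _ _ (fun p _ => h p)

lemma psum_one (n : B.N) (w : B.Assign n) : (B.lawOf ⟨n, w⟩).psum = 1 := by
  show ((B.headOf n w).map Prod.snd).sum = 1
  have hmap : ((B.headOf n w).map Prod.snd) =
      (((Finset.univ.filter (fun v : B.dom n => 0 < B.cpt n w v)).toList).map
        (fun v => B.cpt n w v)) := by
    simp [BN.headOf, List.map_map, Function.comp]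
  rw [hmap, Finset.sum_map_toList]
  rw [Finset.sum_filter_of_ne (fun v _ hv => lt_of_le_of_ne (B.cpt_nonneg n w v) (Ne.symm hv))]
  exact B.cpt_sum n w

lemma headOf_length (n : B.N) (w : B.Assign n) :
    (B.headOf n w).length =
      ((Finset.univ.filter (fun v : B.dom n => 0 < B.cpt n w v)).toList).length :=
  List.length_map _

lemma headOf_get (n : B.N) (w : B.Assign n) (i : ℕ)
    (h : i < ((Finset.univ.filter (fun v : B.dom n => 0 < B.cpt n w v)).toList).length) :
    (B.headOf n w).get ⟨i, by rw [headOf_length]; exact h⟩ =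
      ((⟨n, ((Finset.univ.filter (fun v : B.dom n => 0 < B.cpt n w v)).toList).get ⟨i, h⟩⟩ : B.Atom),
        B.cpt n w (((Finset.univ.filter (fun v : B.dom n => 0 < B.cpt n w v)).toList).get ⟨i, h⟩)) := by
  simp [BN.headOf] <;> rfl

end BodyLemmas

namespace BProc

variable {B : BN} (W : BProc B)

/-- The index (in the head of the law fired at `parent c`) of the head element
realized by the non-root node `c`. -/
noncomputable def chFun (c : W.Node) : Option ℕ :=
  if h : c = W.root then none
  else
    some (((Finset.univ.filter
        (fun v : B.dom (W.nodemap (W.parent c)) =>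
          0 < B.cpt (W.nodemap (W.parent c)) (W.assignAt (W.parent c)) v)).toList).idxOf
      (((W.assignAt_spec (W.parent c) ⟨c, h, rfl⟩).2.2.choose_spec.2.2 c ⟨h, rfl⟩).choose).1)

lemma chFun_root : W.chFun W.root = none := by simp [chFun]

lemma chFun_spec {c s : W.Node} (hc : c ≠ W.root) (hp : W.parent c = s) :
    ∃ v : {v : B.dom (W.nodemap s) // 0 < B.cpt (W.nodemap s) (W.assignAt s) v},
      c = (W.assignAt_spec s ⟨c, hc, hp⟩).2.2.choose v ∧
      W.chFun c = some (((Finset.univ.filter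
        (fun v : B.dom (W.nodemap s) =>
          0 < B.cpt (W.nodemap s) (W.assignAt s) v)).toList).idxOf v.1) := by
  subst hp
  refine ⟨((W.assignAt_spec (W.parent c) ⟨c, hc, rfl⟩).2.2.choose_spec.2.2 c ⟨hc, rfl⟩).choose,
    ((W.assignAt_spec (W.parent c) ⟨c, hc, rfl⟩).2.2.choose_spec.2.2 c ⟨hc, rfl⟩).choose_spec, ?_⟩
  unfold chFun
  rw [dif_neg hc]

end BProc

/-- Bayesian networks embed into CP-logic: for every `B`-process, the underlying
probabilistic process, with the map `E` sending each non-leaf node `s` to the CP-law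
of `CP_B` determined by the network node `nodemap s` and the unique parent assignment
recorded in `I(s)` (and a suitable labelling of the children of each node by the head
elements they realize), is an execution model of the CP-theory `CP_B`. -/
theorem bn_process_is_execution_model (B : BN) (W : BProc B) :
    ∃ ch : W.Node → Option ℕ,
      IsExec B.lawOf
        { Node := W.Node
          root := W.root
          parent := W.parent
          depth := W.depth
          interp := W.interp
          prob := W.prob
          pathProb := W.pathProb
          rule := fun s => (⟨W.nodemap s, W.assignAt s⟩ : B.Idx)
          choice := ch
          depth_root := W.depth_root
          depth_parent := W.depth_parent
          pathProb_root := W.pathProb_root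
          pathProb_parent := W.pathProb_parent } := by
  refine ⟨W.chFun, ⟨W.interp_root, W.prob_mem, ?_, ?_, ?_⟩, ?_⟩
  · -- edge probabilities at each non-leaf sum to 1
    intro s hs
    have hs' : ¬ ∀ s', ¬ (s' ≠ W.root ∧ W.parent s' = s) := hs
    push_neg at hs'
    convert W.prob_sum s hs' using 2
    exact Finset.filter_congr (fun _ _ => Iff.rfl)
  · -- the rule condition at non-leaf nodes
    intro s hs
    have hs' : ¬ ∀ s', ¬ (s' ≠ W.root ∧ W.parent s' = s) := hs
    push_neg at hs'
    have hchild : ∃ c, c ≠ W.root ∧ W.parent c = s := hs'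
    have hw1 := (W.assignAt_spec s hchild).1
    have hg := (W.assignAt_spec s hchild).2.2.choose_spec
    refine ⟨?_, ?_, ?_, ?_, ?_, ?_⟩
    · -- rule s ∈ RE
      show ∀ s', Relation.TransGen (fun y x => y ≠ W.root ∧ W.parent y = x) s s' →
        (⟨W.nodemap s', W.assignAt s'⟩ : B.Idx) ≠ ⟨W.nodemap s, W.assignAt s⟩
      intro s' hanc heq
      have hne := W.nodemap_ne hchild hanc
      have : W.nodemap s' = W.nodemap s := congrArg Sigma.fst heq
      exact hne this
    · -- body satisfied
      exact sat_bodyOf.mpr hw1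
    · -- FiresAt, child condition
      intro s' hs'
      obtain ⟨hne, hp⟩ := hs'
      obtain ⟨v, hveq, hch⟩ := W.chFun_spec hne hp
      have hmem : v.1 ∈ (Finset.univ.filter (fun u : B.dom (W.nodemap s) =>
          0 < B.cpt (W.nodemap s) (W.assignAt s) u)).toList := by
        rw [Finset.mem_toList, Finset.mem_filter]
        exact ⟨Finset.mem_univ _, v.2⟩
      have hidx := List.idxOf_lt_length_iff.mpr hmem
      set L := (Finset.univ.filter (fun u : B.dom (W.nodemap s) =>
          0 < B.cpt (W.nodemap s) (W.assignAt s) u)).toList with hLdef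
      constructor
      · intro i hi
        have hi' : W.chFun s' = some i := hi
        rw [hch] at hi'
        obtain rfl : _ = i := Option.some.inj hi'
        have hfin : List.idxOf v.1 L < (B.lawOf ⟨W.nodemap s, W.assignAt s⟩).head.length := by
          show _ < (B.headOf (W.nodemap s) (W.assignAt s)).length
          rw [headOf_length]; exact hidx
        have hget : ∀ (h : List.idxOf v.1 L < (B.lawOf ⟨W.nodemap s, W.assignAt s⟩).head.length),
            (B.lawOf ⟨W.nodemap s, W.assignAt s⟩).head.get ⟨List.idxOf v.1 L, h⟩ =
              ((⟨W.nodemap s, v.1⟩ : B.Atom), B.cpt (W.nodemap s) (W.assignAt s) v.1) := by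
          intro h
          have hh := headOf_get (W.nodemap s) (W.assignAt s) (List.idxOf v.1 L) hidx
          rw [List.idxOf_get hidx] at hh
          exact hh
        have key : ∃ h : List.idxOf v.1 L < (B.lawOf ⟨W.nodemap s, W.assignAt s⟩).head.length,
            W.interp s' = insert ((B.lawOf ⟨W.nodemap s, W.assignAt s⟩).head.get
              ⟨List.idxOf v.1 L, h⟩).1 (W.interp s) ∧
            W.prob s' = ((B.lawOf ⟨W.nodemap s, W.assignAt s⟩).head.get
              ⟨List.idxOf v.1 L, h⟩).2 := by
          refine ⟨hfin, ?_, ?_⟩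
          · rw [hget hfin, hveq]
            exact (hg.2.1 v).2.1
          · rw [hget hfin, hveq]
            exact (hg.2.1 v).2.2
        exact key
      · intro hnone
        have h0 : W.chFun s' = none := hnone
        rw [hch] at h0
        cases h0
    · -- FiresAt, children with equal choice coincide
      intro s₁ s₂ h1 h2 heq
      obtain ⟨v₁, hv1, hch1⟩ := W.chFun_spec h1.1 h1.2
      obtain ⟨v₂, hv2, hch2⟩ := W.chFun_spec h2.1 h2.2
      have heq' : W.chFun s₁ = W.chFun s₂ := heq
      rw [hch1, hch2] at heq'
      have hidx := Option.some.inj heq'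
      have hm1 : v₁.1 ∈ (Finset.univ.filter (fun u : B.dom (W.nodemap s) =>
          0 < B.cpt (W.nodemap s) (W.assignAt s) u)).toList := by
        rw [Finset.mem_toList, Finset.mem_filter]; exact ⟨Finset.mem_univ _, v₁.2⟩
      have hm2 : v₂.1 ∈ (Finset.univ.filter (fun u : B.dom (W.nodemap s) =>
          0 < B.cpt (W.nodemap s) (W.assignAt s) u)).toList := by
        rw [Finset.mem_toList, Finset.mem_filter]; exact ⟨Finset.mem_univ _, v₂.2⟩
      have hv12 : v₁ = v₂ := Subtype.ext ((List.idxOf_inj hm1).mp hidx)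
      rw [hv1, hv2]
      exact congrArg _ hv12
    · -- FiresAt, every head index is realized
      intro i hi
      have hi' : i < ((Finset.univ.filter (fun u : B.dom (W.nodemap s) =>
          0 < B.cpt (W.nodemap s) (W.assignAt s) u)).toList).length := by
        rw [← headOf_length]; exact hi
      have hupos : 0 < B.cpt (W.nodemap s) (W.assignAt s)
          (((Finset.univ.filter (fun u : B.dom (W.nodemap s) =>
            0 < B.cpt (W.nodemap s) (W.assignAt s) u)).toList).get ⟨i, hi'⟩) := by
        have hmem := List.get_mem ((Finset.univ.filter (fun u : B.dom (W.nodemap s) =>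
            0 < B.cpt (W.nodemap s) (W.assignAt s) u)).toList) ⟨i, hi'⟩
        exact (Finset.mem_filter.mp (Finset.mem_toList.mp hmem)).2
      have hcchild := (hg.2.1 ⟨_, hupos⟩).1
      refine ⟨(W.assignAt_spec s hchild).2.2.choose ⟨_, hupos⟩, hcchild, ?_⟩
      obtain ⟨v', hv', hch'⟩ := W.chFun_spec hcchild.1 hcchild.2
      have hgv : (W.assignAt_spec s hchild).2.2.choose v' =
          (W.assignAt_spec s hchild).2.2.choose ⟨_, hupos⟩ := hv'.symm
      have hvv : v' = ⟨_, hupos⟩ := hg.1 hgv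
      show W.chFun ((W.assignAt_spec s hchild).2.2.choose ⟨_, hupos⟩) = some i
      have hch'' : W.chFun ((W.assignAt_spec s hchild).2.2.choose ⟨_, hupos⟩) =
          some (((Finset.univ.filter (fun u : B.dom (W.nodemap s) =>
            0 < B.cpt (W.nodemap s) (W.assignAt s) u)).toList).idxOf v'.1) := hch'
      rw [hch'', hvv]
      exact congrArg some (List.get_idxOf (Finset.nodup_toList _) ⟨i, hi'⟩)
    · -- FiresAt, no leftover-probability child is needed
      intro hlt
      have hlt' : (B.lawOf ⟨W.nodemap s, W.assignAt s⟩).psum < 1 := hlt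
      rw [psum_one] at hlt'
      exact absurd hlt' (lt_irrefl 1)
  · -- leaf condition
    intro l hleaf r hr hsat
    have hleaf' : ∀ c, ¬ (c ≠ W.root ∧ W.parent c = l) := hleaf
    obtain ⟨n, w⟩ := r
    obtain ⟨s, hanc, hns⟩ := (W.branch_bij l hleaf').surjOn (Set.mem_univ n)
    subst hns
    have hchild : ∃ c, c ≠ W.root ∧ W.parent c = s := by
      cases hanc with
      | single h => exact ⟨l, h⟩
      | tail h1 h2 => exact ⟨_, h2⟩
    have hspec := W.assignAt_spec s hchild
    have hsat' : ∀ p : {x // x ∈ B.parents (W.nodemap s)},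
        (⟨p.1, w p⟩ : B.Atom) ∈ W.interp l := sat_bodyOf.mp hsat
    have hmono := W.interp_mono hanc
    have hweq : w = W.assignAt s := by
      funext p
      exact W.unique_val (hsat' p) (hmono (hspec.1 p))
    have hr' : ∀ s', Relation.TransGen (fun y x => y ≠ W.root ∧ W.parent y = x) l s' →
        (⟨W.nodemap s', W.assignAt s'⟩ : B.Idx) ≠ ⟨W.nodemap s, w⟩ := hr
    refine hr' s hanc ?_
    rw [hweq]
  · -- the execution-model (hypothetical derivation) condition
    intro s hs ν k hHDS hTerm
    have hs' : ¬ ∀ s', ¬ (s' ≠ W.root ∧ W.parent s' = s) := hs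
    push_neg at hs'
    have hchild : ∃ c, c ≠ W.root ∧ W.parent c = s := hs'
    have hstay : ∀ a ∈ W.interp s, ∀ i, i ≤ k → ν i a = TV.t := by
      intro a ha i
      induction i with
      | zero =>
          intro _
          rw [hHDS.1 a, if_pos (show a ∈ W.interp s from ha)]
      | succ i ih =>
          intro hik
          have h1 := ih (by omega)
          obtain ⟨r, hrRE, hval, hfu, hkeep⟩ := hHDS.2 i (by omega)
          have hk : ν (i+1) a = ν i a := by
            refine hkeep a ?_
            rintro ⟨_, hfa⟩
            rw [h1] at hfa
            exact TV.noConfusion hfa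
          rw [hk, h1]
    have hval : Form.val (ν k) (B.bodyOf (W.nodemap s) (W.assignAt s)) = TV.t :=
      val_bodyOf (fun p => hstay _ ((W.assignAt_spec s hchild).1 p) k le_rfl)
    intro hu
    have hu' : Form.val (ν k) (B.bodyOf (W.nodemap s) (W.assignAt s)) = TV.u := hu
    rw [hval] at hu'
    exact TV.noConfusion hu'

end CP
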